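/- For every special type-D partition e of size 2n (n ≥ 0), the C-collapse of (e^+)^- is a metaplectic special partition of size 2n (i.e. a type-C partition whose transpose is of type D). In particular the map d̃_SP(e) := C-collapse of (e^+)^- is a well-defined map from the set of special type-D partitions of size 2n to the set of metaplectic special partitions of size 2n. -/

import Mathlib

/-!
Partitions (Young diagrams) are represented as antitone, eventually-zero
functions `f : ℕ → ℕ`, where `f i` is the length of the `(i+1)`-st row.
-/

/-- `f : ℕ → ℕ` represents a partition (Young diagram). -/
def IsPartition (f : ℕ → ℕ) : Prop :=
  Antitone f ∧ ∃ N, ∀ i, N ≤ i → f i = 0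

/-- The size of a partition: the sum of its parts. -/
noncomputable def size (f : ℕ → ℕ) : ℕ := ∑' i, f i

/-- The sum of the `k` largest parts of a partition. -/
def psum (f : ℕ → ℕ) (k : ℕ) : ℕ := ∑ i ∈ Finset.range k, f i

/-- The multiplicity with which `p` occurs as a part. -/
noncomputable def mult (f : ℕ → ℕ) (p : ℕ) : ℕ := {i | f i = p}.ncard

/-- The transpose (conjugate) partition: `transpose f i` is the length of the
`(i+1)`-st column of `f`. -/
noncomputable def transpose (f : ℕ → ℕ) : ℕ → ℕ := fun i => {j | i < f j}.ncard

/-- The number of parts of a partition (the length of its first column). -/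
noncomputable def numParts (f : ℕ → ℕ) : ℕ := {j | 0 < f j}.ncard

/-- Type B: odd size, and every (positive) even part occurs with even multiplicity. -/
def IsTypeB (f : ℕ → ℕ) : Prop :=
  IsPartition f ∧ Odd (size f) ∧ ∀ p, 0 < p → Even p → Even (mult f p)

/-- Type C: even size, and every odd part occurs with even multiplicity. -/
def IsTypeC (f : ℕ → ℕ) : Prop :=
  IsPartition f ∧ Even (size f) ∧ ∀ p, Odd p → Even (mult f p)

/-- Type D: even size, and every (positive) even part occurs with even multiplicity. -/
def IsTypeD (f : ℕ → ℕ) : Prop :=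
  IsPartition f ∧ Even (size f) ∧ ∀ p, 0 < p → Even p → Even (mult f p)

/-- Dominance order `f ≼ g` between partitions of the same size. -/
def Dom (f g : ℕ → ℕ) : Prop :=
  size f = size g ∧ ∀ k, psum f k ≤ psum g k

/-- `c` is the X-collapse of `d`, where predicate `T` expresses "type X": `c` is
the greatest type-X partition of the same size dominated by `d`. -/
def IsCollapse (T : (ℕ → ℕ) → Prop) (d c : ℕ → ℕ) : Prop :=
  T c ∧ Dom c d ∧ ∀ e, T e → Dom e d → Dom e c

open Classical in
/-- The X-collapse of `d` (junk value if it does not exist). -/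
noncomputable def collapse (T : (ℕ → ℕ) → Prop) (d : ℕ → ℕ) : ℕ → ℕ :=
  if h : ∃ c, IsCollapse T d c then h.choose else fun _ => 0

/-- The B-collapse. -/
noncomputable def collapseB : (ℕ → ℕ) → ℕ → ℕ := collapse IsTypeB

/-- The C-collapse. -/
noncomputable def collapseC : (ℕ → ℕ) → ℕ → ℕ := collapse IsTypeC

/-- The D-collapse. -/
noncomputable def collapseD : (ℕ → ℕ) → ℕ → ℕ := collapse IsTypeD

/-- `d⁺`: add one box to the first row. -/
def boxPlus (f : ℕ → ℕ) : ℕ → ℕ := fun i => if i = 0 then f 0 + 1 else f i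

/-- `d⁻`: remove one box from the last row (for nonempty `d`). -/
noncomputable def boxMinus (f : ℕ → ℕ) : ℕ → ℕ :=
  fun i => if i = numParts f - 1 then f i - 1 else f i

/-- `∇(d)`: remove the first column (every part decreased by 1). -/
def delCol (f : ℕ → ℕ) : ℕ → ℕ := fun i => f i - 1

/-- `∇̌(d)`: remove the first row (delete one largest part). -/
def delRow (f : ℕ → ℕ) : ℕ → ℕ := fun i => f (i + 1)

/-- The metaplectic Lusztig–Spaltenstein map: the D-collapse of the transpose. -/
noncomputable def mLS (d : ℕ → ℕ) : ℕ → ℕ := collapseD (transpose d)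

/-- The map `d̃_SP`: the C-collapse of `(e⁺)⁻`. -/
noncomputable def mSP (e : ℕ → ℕ) : ℕ → ℕ := collapseC (boxMinus (boxPlus e))

/-- The metaplectic Barbasch–Vogan duality. -/
noncomputable def mBV (d : ℕ → ℕ) : ℕ → ℕ := mSP (mLS d)

section Infra

lemma psum_succ (f : ℕ → ℕ) (k : ℕ) : psum f (k+1) = psum f k + f k :=
  Finset.sum_range_succ f k

lemma psum_zero (f : ℕ → ℕ) : psum f 0 = 0 := Finset.sum_range_zero (f := f)

lemma psum_mono (f : ℕ → ℕ) : Monotone (psum f) := fun _ _ h =>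
  Finset.sum_le_sum_of_subset (Finset.range_subset_range.2 h)

lemma size_eq_psum {f : ℕ → ℕ} {N : ℕ} (h : ∀ i, N ≤ i → f i = 0) :
    size f = psum f N := by
  unfold size psum
  exact tsum_eq_sum (fun i hi => h i (Nat.le_of_not_lt (fun hc => hi (Finset.mem_range.2 hc))))

lemma dc_eq_Iio {S : Set ℕ} (hfin : S.Finite)
    (hdc : ∀ ⦃a b : ℕ⦄, a ≤ b → b ∈ S → a ∈ S) : S = Set.Iio S.ncard := by
  have hne : Sᶜ.Nonempty := by
    by_contra h
    rw [Set.not_nonempty_iff_eq_empty, Set.compl_empty_iff] at h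
    rw [h] at hfin
    exact Set.infinite_univ hfin
  have hnS : sInf Sᶜ ∉ S := Nat.sInf_mem hne
  have hS : S = Set.Iio (sInf Sᶜ) := by
    ext b
    constructor
    · intro hb
      by_contra hbn
      rw [Set.mem_Iio] at hbn
      push_neg at hbn
      exact hnS (hdc hbn hb)
    · intro hb
      by_contra hbS
      have := Nat.sInf_le (Set.mem_compl hbS)
      rw [Set.mem_Iio] at hb
      omega
  have hn : S.ncard = sInf Sᶜ := by
    conv_lhs => rw [hS]
    rw [← Finset.coe_range, Set.ncard_coe_finset, Finset.card_range]
  rw [hn]; exact hS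

end Infra
section Anum

/-- number of parts of `f` that are `≥ p`. -/
noncomputable def Anum (f : ℕ → ℕ) (p : ℕ) : ℕ := {i | p ≤ f i}.ncard

lemma Anum_set {f : ℕ → ℕ} {N : ℕ} (hf : Antitone f) (h0 : ∀ i, N ≤ i → f i = 0)
    {p : ℕ} (hp : 1 ≤ p) : {i | p ≤ f i} = Set.Iio (Anum f p) := by
  apply dc_eq_Iio
  · apply Set.Finite.subset (Set.finite_Iio N)
    intro i hi
    simp only [Set.mem_setOf_eq] at hi
    simp only [Set.mem_Iio]
    by_contra h
    push_neg at h
    have := h0 i h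
    omega
  · intro a b hab hb
    exact le_trans hb (hf hab)

lemma Anum_lt_iff {f : ℕ → ℕ} {N : ℕ} (hf : Antitone f) (h0 : ∀ i, N ≤ i → f i = 0)
    {p : ℕ} (hp : 1 ≤ p) (i : ℕ) : p ≤ f i ↔ i < Anum f p := by
  rw [← Set.mem_Iio, ← Anum_set hf h0 hp]
  rfl

lemma Anum_anti {f : ℕ → ℕ} {N : ℕ} (hf : Antitone f) (h0 : ∀ i, N ≤ i → f i = 0)
    {p q : ℕ} (hp : 1 ≤ p) (hpq : p ≤ q) : Anum f q ≤ Anum f p := by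
  by_contra h
  push_neg at h
  have h1 := (Anum_lt_iff hf h0 (by omega : 1 ≤ q) (Anum f p)).2 h
  have h2 := (Anum_lt_iff hf h0 hp (Anum f p)).1 (by omega)
  omega

lemma mult_eq_Anum {f : ℕ → ℕ} {N : ℕ} (hf : Antitone f) (h0 : ∀ i, N ≤ i → f i = 0)
    {p : ℕ} (hp : 1 ≤ p) : mult f p = Anum f p - Anum f (p+1) := by
  have h1 : {i | f i = p} = Set.Ico (Anum f (p+1)) (Anum f p) := by
    ext i
    simp only [Set.mem_setOf_eq, Set.mem_Ico]
    have a1 := Anum_lt_iff hf h0 hp i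
    have a2 := Anum_lt_iff hf h0 (by omega : 1 ≤ p+1) i
    omega
  rw [mult, h1, ← Finset.coe_Ico, Set.ncard_coe_finset, Nat.card_Ico]

lemma psum_Anum_succ {f : ℕ → ℕ} {N : ℕ} (hf : Antitone f) (h0 : ∀ i, N ≤ i → f i = 0)
    {p : ℕ} (hp : 1 ≤ p) :
    psum f (Anum f p) = psum f (Anum f (p+1)) + p * (Anum f p - Anum f (p+1)) := by
  have hle : Anum f (p+1) ≤ Anum f p := Anum_anti hf h0 hp (by omega)
  unfold psum
  rw [Finset.range_eq_Ico,
    ← Finset.sum_Ico_consecutive f (Nat.zero_le (Anum f (p+1))) hle]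
  congr 1
  · rw [Finset.range_eq_Ico]
  have hval : ∀ i ∈ Finset.Ico (Anum f (p+1)) (Anum f p), f i = p := by
    intro i hi
    rw [Finset.mem_Ico] at hi
    have a1 := Anum_lt_iff hf h0 hp i
    have a2 := Anum_lt_iff hf h0 (by omega : 1 ≤ p+1) i
    omega
  rw [Finset.sum_congr rfl hval, Finset.sum_const, Nat.card_Ico, smul_eq_mul, mul_comm]

lemma Anum_zero_of_gt {f : ℕ → ℕ} {p : ℕ} (hp : f 0 < p) (hf : Antitone f) :
    Anum f p = 0 := by
  unfold Anum
  have : {i | p ≤ f i} = (∅ : Set ℕ) := by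
    ext i
    simp only [Set.mem_setOf_eq, Set.mem_empty_iff_false, iff_false]
    have := hf (Nat.zero_le i)
    omega
  rw [this, Set.ncard_empty]

lemma even_psum_Anum {f : ℕ → ℕ} {N : ℕ} (hf : Antitone f) (h0 : ∀ i, N ≤ i → f i = 0)
    {p₀ : ℕ} (hp₀ : 1 ≤ p₀) (hm : ∀ p, p₀ ≤ p → Odd p → Even (mult f p)) :
    ∀ p, p₀ ≤ p → Even (psum f (Anum f p)) := by
  suffices H : ∀ t p, p₀ ≤ p → f 0 + 1 - p ≤ t → Even (psum f (Anum f p)) by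
    exact fun p hp => H (f 0 + 1 - p) p hp le_rfl
  intro t
  induction t with
  | zero =>
    intro p hp hfuel
    rw [Anum_zero_of_gt (by omega) hf, psum_zero]
    exact Even.zero
  | succ t ih =>
    intro p hp hfuel
    by_cases hbig : f 0 < p
    · rw [Anum_zero_of_gt hbig hf, psum_zero]
      exact Even.zero
    · push_neg at hbig
      have hprev : Even (psum f (Anum f (p+1))) := ih (p+1) (by omega) (by omega)
      rw [psum_Anum_succ hf h0 (by omega : 1 ≤ p)]
      rcases Nat.even_or_odd p with hpe | hpo
      · exact hprev.add (hpe.mul_right _)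
      · have hmp := hm p hp hpo
        rw [mult_eq_Anum hf h0 (by omega : 1 ≤ p)] at hmp
        exact hprev.add (hmp.mul_left _)

lemma even_psum_of_drop {f : ℕ → ℕ} (hf : IsTypeC f) {k : ℕ} (hk : 1 ≤ k)
    (hdrop : f k < f (k-1)) : Even (psum f k) := by
  obtain ⟨⟨hanti, N, h0⟩, _, hmult⟩ := hf
  have hset : {i | f k + 1 ≤ f i} = Set.Iio k := by
    ext i
    simp only [Set.mem_setOf_eq, Set.mem_Iio]
    constructor
    · intro hi
      by_contra hik
      push_neg at hik
      have := hanti hik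
      omega
    · intro hik
      have : f (k-1) ≤ f i := hanti (by omega)
      omega
  have hA : k = Anum f (f k + 1) := by
    have h1 := Anum_set hanti h0 (p := f k + 1) (by omega)
    rw [hset] at h1
    have h2 : ∀ x, x < k ↔ x < Anum f (f k + 1) := by
      intro x
      rw [← Set.mem_Iio, h1, Set.mem_Iio]
    have h3 := h2 k
    have h4 := h2 (Anum f (f k + 1))
    omega
  rw [hA]
  exact even_psum_Anum hanti h0 le_rfl (fun p _ hodd => hmult p hodd) _ (by omega)

lemma numParts_eq_Anum (f : ℕ → ℕ) : numParts f = Anum f 1 := rfl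

lemma transpose_eq_Anum (f : ℕ → ℕ) (i : ℕ) : transpose f i = Anum f (i+1) := rfl

end Anum
section Transpose

lemma transpose_partition {f : ℕ → ℕ} (hf : IsPartition f) : IsPartition (transpose f) := by
  obtain ⟨hanti, N, h0⟩ := hf
  constructor
  · intro a b hab
    rw [transpose_eq_Anum, transpose_eq_Anum]
    exact Anum_anti hanti h0 (by omega) (by omega)
  · refine ⟨f 0, fun i hi => ?_⟩
    rw [transpose_eq_Anum]
    exact Anum_zero_of_gt (by omega) hanti

lemma size_transpose {f : ℕ → ℕ} {M : ℕ} (hanti : Antitone f) (h0 : ∀ i, M ≤ i → f i = 0) :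
    size (transpose f) = size f := by
  have hb : ∀ i, f 0 ≤ i → transpose f i = 0 := fun i hi => by
    rw [transpose_eq_Anum]; exact Anum_zero_of_gt (by omega) hanti
  rw [size_eq_psum hb, size_eq_psum h0]
  have ht : ∀ i, transpose f i = ((Finset.range M).filter (fun j => i < f j)).card := by
    intro i
    rw [transpose]
    rw [show {j | i < f j} = ↑((Finset.range M).filter (fun j => i < f j)) by
      ext j
      simp only [Finset.coe_filter, Finset.mem_range, Set.mem_setOf_eq, iff_and_self]
      intro hj
      by_contra hjM
      push_neg at hjM
      have := h0 j hjM
      omega]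
    rw [Set.ncard_coe_finset]
  unfold psum
  calc ∑ i ∈ Finset.range (f 0), transpose f i
      = ∑ i ∈ Finset.range (f 0), ∑ j ∈ Finset.range M, (if i < f j then 1 else 0) := by
        refine Finset.sum_congr rfl fun i _ => ?_
        rw [ht i, Finset.card_filter]
    _ = ∑ j ∈ Finset.range M, ∑ i ∈ Finset.range (f 0), (if i < f j then 1 else 0) :=
        Finset.sum_comm
    _ = ∑ j ∈ Finset.range M, f j := by
        refine Finset.sum_congr rfl fun j _ => ?_
        rw [← Finset.card_filter]
        have : Finset.filter (fun i => i < f j) (Finset.range (f 0)) = Finset.range (f j) := by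
          ext i
          simp only [Finset.mem_filter, Finset.mem_range]
          have : f j ≤ f 0 := hanti (Nat.zero_le j)
          omega
        rw [this, Finset.card_range]

lemma mult_transpose {f : ℕ → ℕ} {N : ℕ} (hanti : Antitone f) (h0 : ∀ i, N ≤ i → f i = 0)
    {p : ℕ} (hp : 1 ≤ p) : mult (transpose f) p = f (p-1) - f p := by
  have hmem : ∀ (i pp : ℕ), 1 ≤ pp → (pp ≤ transpose f i ↔ i < f (pp-1)) := by
    intro i pp hpp
    rw [transpose_eq_Anum]
    have a1 := Anum_lt_iff hanti h0 (by omega : 1 ≤ i+1) (pp-1)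
    constructor
    · intro h
      have : pp - 1 < Anum f (i+1) := by omega
      have := a1.2 this
      omega
    · intro h
      have : i + 1 ≤ f (pp-1) := by omega
      have := a1.1 this
      omega
  have h1 : {i | transpose f i = p} = Set.Ico (f p) (f (p-1)) := by
    ext i
    simp only [Set.mem_setOf_eq, Set.mem_Ico]
    have a1 := hmem i p hp
    have a2 := hmem i (p+1) (by omega)
    have : p + 1 - 1 = p := by omega
    rw [this] at a2
    omega
  rw [mult, h1, ← Finset.coe_Ico, Set.ncard_coe_finset, Nat.card_Ico]

end Transpose
section ExistsCollapse

lemma psum_le_size {f : ℕ → ℕ} {N : ℕ} (h0 : ∀ i, N ≤ i → f i = 0) (k : ℕ) :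
    psum f k ≤ size f := by
  have h1 : size f = psum f (max k N) :=
    size_eq_psum (fun i hi => h0 i (le_trans (le_max_right _ _) hi))
  rw [h1]
  exact psum_mono f (le_max_left _ _)

lemma exists_collapseC : ∀ (μ : ℕ) (d : ℕ → ℕ), IsPartition d → Even (size d) →
    (∑ i ∈ Finset.range (size d + 1), psum d i) ≤ μ →
    ∃ c, IsCollapse IsTypeC d c ∧ (∀ i, psum d i ≤ psum c i + 1) ∧
      (∀ i, Even (psum d i) → psum c i = psum d i) := by
  intro μ
  induction μ using Nat.strong_induction_on with
  | _ μ ih =>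
  intro d hdpart hdeven hμ
  obtain ⟨hanti, Nd, h0⟩ := hdpart
  by_cases hC : IsTypeC d
  · exact ⟨d, ⟨hC, ⟨rfl, fun _ => le_rfl⟩, fun g _ hgd => hgd⟩,
      fun i => by omega, fun i _ => rfl⟩
  · classical
    have hExq : ∃ p, Odd p ∧ ¬ Even (mult d p) := by
      have h1 : ¬ ∀ p, Odd p → Even (mult d p) := fun h => hC ⟨⟨hanti, Nd, h0⟩, hdeven, h⟩
      push_neg at h1
      obtain ⟨p, hp1, hp2⟩ := h1
      exact ⟨p, hp1, hp2⟩
    set P : ℕ → Prop := fun p => Odd p ∧ ¬ Even (mult d p) with hPdef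
    have hbound : ∀ p, P p → p ≤ d 0 := by
      intro p hp
      by_contra hb
      push_neg at hb
      have hset : {i | d i = p} = (∅ : Set ℕ) := by
        ext i
        simp only [Set.mem_setOf_eq, Set.mem_empty_iff_false, iff_false]
        have := hanti (Nat.zero_le i)
        omega
      exact hp.2 (by rw [mult, hset, Set.ncard_empty]; exact Even.zero)
    obtain ⟨p₁, hp₁⟩ := hExq
    set q := Nat.findGreatest P (d 0) with hqdef
    have hqP : P q := Nat.findGreatest_spec (hbound p₁ hp₁) hp₁
    have hqmax : ∀ p, q < p → Odd p → Even (mult d p) := by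
      intro p hqp hodd
      by_contra hev
      by_cases hpd : p ≤ d 0
      · exact Nat.findGreatest_is_greatest hqp hpd ⟨hodd, hev⟩
      · push_neg at hpd
        exact absurd (hbound p ⟨hodd, hev⟩) (by omega)
    obtain ⟨u, hu⟩ := hqP.1
    have hq1 : 1 ≤ q := by omega
    have hEvless : Even (psum d (Anum d (q+1))) :=
      even_psum_Anum hanti h0 (by omega : 1 ≤ q+1)
        (fun p hp hodd => hqmax p (by omega) hodd) _ le_rfl
    have hmq : mult d q = Anum d q - Anum d (q+1) := mult_eq_Anum hanti h0 hq1
    have hAle : Anum d (q+1) ≤ Anum d q := Anum_anti hanti h0 hq1 (by omega)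
    have hodda : Odd (psum d (Anum d q)) := by
      rw [psum_Anum_succ hanti h0 hq1]
      have hoddm : Odd (mult d q) := Nat.not_even_iff_odd.1 hqP.2
      rw [hmq] at hoddm
      exact hEvless.add_odd (hqP.1.mul hoddm)
    have hq2 : 2 ≤ q := by
      by_contra hlt
      have hq1' : q = 1 := by omega
      have hsz : size d = psum d (Anum d 1) := by
        apply size_eq_psum
        intro i hi
        have a1 := Anum_lt_iff hanti h0 le_rfl i
        omega
      rw [hq1'] at hodda
      rw [hsz] at hdeven
      rw [Nat.even_iff] at hdeven
      rw [Nat.odd_iff] at hodda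
      omega
    set k := Anum d q with hkdef
    set m := Anum d (q-1) with hmdef
    have hkm : k ≤ m := Anum_anti hanti h0 (by omega) (by omega)
    have hmne : mult d q ≠ 0 := fun h => hqP.2 (by rw [h]; exact Even.zero)
    have hk1 : 1 ≤ k := by omega
    have hdk1 : d (k-1) = q := by
      have a1 := Anum_lt_iff hanti h0 (by omega : 1 ≤ q) (k-1)
      have a2 := Anum_lt_iff hanti h0 (by omega : 1 ≤ q+1) (k-1)
      omega
    have hdik : ∀ i, k ≤ i → d i ≤ q - 1 := by
      intro i hi
      have a1 := Anum_lt_iff hanti h0 (by omega : 1 ≤ q) i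
      omega
    have hblk : ∀ i, k ≤ i → i < m → d i = q - 1 := by
      intro i h1 h2
      have a1 := Anum_lt_iff hanti h0 (by omega : 1 ≤ q) i
      have a2 := Anum_lt_iff hanti h0 (by omega : 1 ≤ q-1) i
      omega
    have hdm : ∀ i, m ≤ i → d i ≤ q - 2 := by
      intro i hi
      have a2 := Anum_lt_iff hanti h0 (by omega : 1 ≤ q-1) i
      omega
    set d' : ℕ → ℕ := fun i => if i = k-1 then q-1 else if i = m then d m + 1 else d i
      with hd'def
    have hd'v : ∀ i, d' i = if i = k-1 then q-1 else if i = m then d m + 1 else d i :=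
      fun i => rfl
    have hkm' : k - 1 < m := by omega
    have hd'anti : Antitone d' := by
      apply antitone_nat_of_succ_le
      intro i
      rw [hd'v i, hd'v (i+1)]
      by_cases h1 : i + 1 = k - 1
      · have hik : ¬ (i = k-1) := by omega
        have him : ¬ (i = m) := by omega
        simp only [if_neg hik, if_neg him, if_pos h1]
        have : d (k-1) ≤ d i := hanti (by omega)
        omega
      · by_cases h2 : i = k - 1
        · simp only [if_pos h2, if_neg h1]
          by_cases h3 : i + 1 = m
          · simp only [if_pos h3]
            have := hdm m le_rfl
            omega
          · simp only [if_neg h3]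
            have := hdik (i+1) (by omega)
            omega
        · simp only [if_neg h2, if_neg h1]
          by_cases h3 : i + 1 = m
          · simp only [if_pos h3]
            by_cases h4 : i = m
            · exact absurd h3 (by omega)
            · simp only [if_neg h4]
              have h5 := hdm m le_rfl
              by_cases h6 : i < k
              · have h7 : d (k-1) ≤ d i := hanti (by omega)
                omega
              · have := hblk i (by omega) (by omega)
                omega
          · simp only [if_neg h3]
            by_cases h4 : i = m
            · subst h4
              have h5 : d (m+1) ≤ d m := hanti (by omega)
              split_ifs <;> omega
            · simp only [if_neg h4]
              exact hanti (by omega)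
    have h0' : ∀ i, max Nd (m+1) ≤ i → d' i = 0 := by
      intro i hi
      rw [hd'v]
      have h1 : ¬ (i = k - 1) := by omega
      have h2 : ¬ (i = m) := by omega
      simp only [if_neg h1, if_neg h2]
      exact h0 i (by omega)
    have hps : ∀ i, psum d' i + (if k-1 < i then 1 else 0)
        = psum d i + (if m < i then 1 else 0) := by
      intro i
      induction i with
      | zero => simp [psum_zero]
      | succ i ihp =>
        rw [psum_succ, psum_succ, hd'v i]
        by_cases h1 : i = k-1
        · subst h1
          rw [if_pos rfl]
          have h2 := hdk1
          split_ifs at ihp ⊢ <;> omega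
        · rw [if_neg h1]
          by_cases h2 : i = m
          · subst h2
            rw [if_pos rfl]
            split_ifs at ihp ⊢ <;> omega
          · rw [if_neg h2]
            split_ifs at ihp ⊢ <;> omega
    have hpsL : ∀ i, i < k → psum d' i = psum d i := by
      intro i hi
      have := hps i
      split_ifs at this <;> omega
    have hpsM : ∀ i, k ≤ i → i ≤ m → psum d' i + 1 = psum d i := by
      intro i h1 h2
      have := hps i
      split_ifs at this <;> omega
    have hpsR : ∀ i, m < i → psum d' i = psum d i := by
      intro i hi
      have := hps i
      split_ifs at this <;> omega
    have hNb : ∀ i, max Nd (m+1) ≤ i → d i = 0 := fun i hi => h0 i (by omega)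
    have hsize' : size d' = size d := by
      rw [size_eq_psum h0', size_eq_psum hNb]
      exact hpsR _ (by omega)
    have hdeven' : Even (size d') := by rw [hsize']; exact hdeven
    have hk_le : k ≤ size d := by
      have h1 : k ≤ Anum d 1 := Anum_anti hanti h0 le_rfl (by omega)
      have h2 : Anum d 1 ≤ psum d (Anum d 1) := by
        unfold psum
        calc Anum d 1 = ∑ _i ∈ Finset.range (Anum d 1), 1 := by
              rw [Finset.sum_const, Finset.card_range, smul_eq_mul, mul_one]
        _ ≤ _ := Finset.sum_le_sum (fun i hi => by
            rw [Finset.mem_range] at hi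
            exact (Anum_lt_iff hanti h0 le_rfl i).mpr hi)
      have h3 : psum d (Anum d 1) ≤ size d := psum_le_size h0 _
      omega
    have hμ' : (∑ i ∈ Finset.range (size d' + 1), psum d' i) < μ := by
      have hlt : (∑ i ∈ Finset.range (size d + 1), psum d' i)
          < (∑ i ∈ Finset.range (size d + 1), psum d i) := by
        apply Finset.sum_lt_sum
        · intro i _
          have := hps i
          split_ifs at this <;> omega
        · refine ⟨k, Finset.mem_range.2 (by omega), ?_⟩
          have := hpsM k le_rfl hkm
          omega
      rw [hsize']
      omega
    obtain ⟨c, ⟨hcC, hcDom', hcMax'⟩, hinv1', hinv2'⟩ :=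
      ih _ hμ' d' ⟨hd'anti, ⟨max Nd (m+1), h0'⟩⟩ hdeven' le_rfl
    have hob : ∀ i, k ≤ i → i ≤ m → Odd (psum d i) := by
      have H : ∀ t, k + t ≤ m → Odd (psum d (k + t)) := by
        intro t
        induction t with
        | zero =>
          intro _
          simpa using hodda
        | succ t iht =>
          intro hle
          have h1 := iht (by omega)
          have h2 : d (k+t) = q - 1 := hblk (k+t) (by omega) (by omega)
          rw [show k + (t+1) = (k+t)+1 by omega, psum_succ, h2]
          obtain ⟨s, hs⟩ := h1
          exact ⟨s + u, by omega⟩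
      intro i hki him
      have := H (i - k) (by omega)
      rw [show k + (i-k) = i by omega] at this
      exact this
    have hkey : ∀ g, IsTypeC g → Dom g d → ∀ i, psum g i ≤ psum d' i := by
      intro g hg hgd i
      have hganti : Antitone g := hg.1.1
      by_cases hin : k ≤ i ∧ i ≤ m
      · have H : ∀ t, k + t ≤ m → psum g (k+t) < psum d (k+t) := by
          intro t
          induction t with
          | zero =>
            intro _
            simp only [Nat.add_zero]
            by_contra hge
            push_neg at hge
            have heq : psum g k = psum d k := le_antisymm (hgd.2 k) hge
            have hoddg : Odd (psum g k) := by rw [heq]; exact hob k le_rfl hkm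
            have hflat : g (k-1) = g k := by
              by_contra hne
              have hlt : g k < g (k-1) := lt_of_le_of_ne (hganti (by omega))
                (fun h => hne h.symm)
              have := even_psum_of_drop hg hk1 hlt
              rw [Nat.even_iff] at this
              rw [Nat.odd_iff] at hoddg
              omega
            have e1 : psum g (k+1) = psum g k + g k := psum_succ g k
            have e2 : psum d (k+1) = psum d k + d k := psum_succ d k
            have e3 := hgd.2 (k+1)
            have hgk : g k ≤ d k := by omega
            have hdk : d k ≤ q - 1 := hdik k le_rfl
            have e4 : psum g ((k-1)+1) = psum g (k-1) + g (k-1) := psum_succ g (k-1)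
            have e5 : psum d ((k-1)+1) = psum d (k-1) + d (k-1) := psum_succ d (k-1)
            rw [show k-1+1 = k by omega] at e4 e5
            have e6 := hgd.2 (k-1)
            omega
          | succ t iht =>
            intro hle
            by_contra hge
            push_neg at hge
            have hjk : 1 ≤ k + (t+1) := by omega
            set j := k + (t+1) with hjdef
            have heq : psum g j = psum d j := le_antisymm (hgd.2 j) hge
            have hoddg : Odd (psum g j) := by rw [heq]; exact hob j (by omega) (by omega)
            have hflat : g (j-1) = g j := by
              by_contra hne
              have hlt : g j < g (j-1) := lt_of_le_of_ne (hganti (by omega))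
                (fun h => hne h.symm)
              have := even_psum_of_drop hg (by omega : 1 ≤ j) hlt
              rw [Nat.even_iff] at this
              rw [Nat.odd_iff] at hoddg
              omega
            have e1 : psum g (j+1) = psum g j + g j := psum_succ g j
            have e2 : psum d (j+1) = psum d j + d j := psum_succ d j
            have e3 := hgd.2 (j+1)
            have hgk : g j ≤ d j := by omega
            have hdk : d j ≤ q - 1 := hdik j (by omega)
            have e4 : psum g ((j-1)+1) = psum g (j-1) + g (j-1) := psum_succ g (j-1)
            have e5 : psum d ((j-1)+1) = psum d (j-1) + d (j-1) := psum_succ d (j-1)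
            rw [show j-1+1 = j by omega] at e4 e5
            have hdj1 : d (j-1) = q - 1 := hblk (j-1) (by omega) (by omega)
            have hIH : psum g (j-1) < psum d (j-1) := by
              have := iht (by omega)
              rw [show k + t = j - 1 by omega] at this
              exact this
            omega
        have h1 := H (i - k) (by omega)
        rw [show k + (i-k) = i by omega] at h1
        have h2 := hpsM i hin.1 hin.2
        omega
      · push_neg at hin
        by_cases h1 : i < k
        · rw [hpsL i h1]; exact hgd.2 i
        · push_neg at h1
          rw [hpsR i (hin h1)]; exact hgd.2 i
    refine ⟨c, ⟨hcC, ?_, ?_⟩, ?_, ?_⟩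
    · refine ⟨hcDom'.1.trans hsize', fun kk => ?_⟩
      have h1 := hcDom'.2 kk
      have h2 := hps kk
      split_ifs at h2 <;> omega
    · intro g hgC hgDom
      exact hcMax' g hgC ⟨hgDom.1.trans hsize'.symm, hkey g hgC hgDom⟩
    · intro i
      by_cases hin : k ≤ i ∧ i ≤ m
      · have h1 := hpsM i hin.1 hin.2
        have h2 : Even (psum d' i) := by
          have h3 := hob i hin.1 hin.2
          rw [Nat.odd_iff] at h3
          rw [Nat.even_iff]
          omega
        have h4 := hinv2' i h2
        omega
      · push_neg at hin
        have h1 : psum d' i = psum d i := by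
          by_cases h2 : i < k
          · exact hpsL i h2
          · exact hpsR i (hin (by omega))
        have := hinv1' i
        omega
    · intro i hev
      by_cases hin : k ≤ i ∧ i ≤ m
      · have h3 := hob i hin.1 hin.2
        rw [Nat.odd_iff] at h3
        rw [Nat.even_iff] at hev
        omega
      · push_neg at hin
        have h1 : psum d' i = psum d i := by
          by_cases h2 : i < k
          · exact hpsL i h2
          · exact hpsR i (hin (by omega))
        rw [← h1] at hev ⊢
        exact hinv2' i hev

end ExistsCollapse
section Unique

lemma isCollapse_unique {T : (ℕ → ℕ) → Prop} {d c₁ c₂ : ℕ → ℕ}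
    (h1 : IsCollapse T d c₁) (h2 : IsCollapse T d c₂) : c₁ = c₂ := by
  have d12 : Dom c₁ c₂ := h2.2.2 c₁ h1.1 h1.2.1
  have d21 : Dom c₂ c₁ := h1.2.2 c₂ h2.1 h2.2.1
  have hps : ∀ kk, psum c₁ kk = psum c₂ kk := fun kk => le_antisymm (d12.2 kk) (d21.2 kk)
  funext i
  have e1 := psum_succ c₁ i
  have e2 := psum_succ c₂ i
  have f1 := hps i
  have f2 := hps (i+1)
  omega

lemma collapse_eq_of_isCollapse {T : (ℕ → ℕ) → Prop} {d c : ℕ → ℕ} (h : IsCollapse T d c) :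
    collapse T d = c := by
  unfold collapse
  rw [dif_pos ⟨c, h⟩]
  exact isCollapse_unique (Exists.choose_spec (⟨c, h⟩ : ∃ c', IsCollapse T d c')) h

end Unique
/-- for every special type-D partition `e` of size `2n`, the
C-collapse of `(e⁺)⁻` is a metaplectic special partition of size `2n`; in
particular `d̃_SP` is well-defined from special type-D partitions of size `2n`
to metaplectic special partitions of size `2n`. -/
theorem stmt_3 (n : ℕ) (e : ℕ → ℕ) (he : IsTypeD e) (hesp : IsTypeC (transpose e))
    (hsize : size e = 2 * n) :
    IsTypeC (mSP e) ∧ IsTypeD (transpose (mSP e)) ∧ size (mSP e) = 2 * n := by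
  classical
  obtain ⟨⟨hanti, Ne, h0e⟩, heeven, hemult⟩ := he
  by_cases hn0 : size e = 0
  · -- degenerate case : e = 0
    have hzn : 2 * n = 0 := by omega
    have he0 : ∀ i, e i = 0 := by
      intro i
      have h1 : size e = psum e (max Ne (i+1)) :=
        size_eq_psum (fun j hj => h0e j (le_trans (le_max_left _ _) hj))
      have h2 : psum e (max Ne (i+1)) = 0 := by omega
      unfold psum at h2
      exact Finset.sum_eq_zero_iff.mp h2 i (Finset.mem_range.2 (by omega))
    set d := boxMinus (boxPlus e) with hddef
    have hnp : numParts (boxPlus e) = 1 := by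
      have hset : {j | 0 < boxPlus e j} = {0} := by
        ext j
        simp only [Set.mem_setOf_eq, Set.mem_singleton_iff, boxPlus]
        by_cases h : j = 0
        · subst h; simp
        · rw [if_neg h, he0 j]
          omega
      rw [numParts, hset, Set.ncard_singleton]
    have hd0 : ∀ i, d i = 0 := by
      intro i
      rw [hddef]
      unfold boxMinus
      rw [hnp]
      unfold boxPlus
      by_cases h : i = 0
      · subst h
        rw [if_pos (show (0:ℕ) = 1-1 from rfl), if_pos rfl, he0 0]
      · rw [if_neg (show ¬ i = 1-1 by omega), if_neg h]
        exact he0 i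
    have hdpart : IsPartition d := ⟨fun a b _ => by rw [hd0, hd0], ⟨0, fun i _ => hd0 i⟩⟩
    have hdsize : size d = 0 := by
      have h1 := size_eq_psum (f := d) (N := 0) (fun i _ => hd0 i)
      rw [psum_zero] at h1
      exact h1
    have hdtC : IsTypeC d := by
      refine ⟨hdpart, by rw [hdsize]; exact Even.zero, fun p hp => ?_⟩
      have hset : {i | d i = p} = (∅ : Set ℕ) := by
        ext i
        simp only [Set.mem_setOf_eq, Set.mem_empty_iff_false, iff_false]
        rw [hd0 i]
        rw [Nat.odd_iff] at hp
        omega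
      rw [mult, hset, Set.ncard_empty]
      exact Even.zero
    have hcol : IsCollapse IsTypeC d d := ⟨hdtC, ⟨rfl, fun _ => le_rfl⟩, fun g _ hg => hg⟩
    have hm : mSP e = d := by
      unfold mSP collapseC
      rw [← hddef]
      exact collapse_eq_of_isCollapse hcol
    rw [hm]
    have htr0 : ∀ i, transpose d i = 0 := by
      intro i
      rw [transpose]
      have hset : {j | i < d j} = (∅ : Set ℕ) := by
        ext j
        simp [hd0 j]
      rw [hset, Set.ncard_empty]
    refine ⟨hdtC, ⟨⟨fun a b _ => by rw [htr0, htr0], ⟨0, fun i _ => htr0 i⟩⟩, ?_, ?_⟩, ?_⟩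
    · have h1 := size_eq_psum (f := transpose d) (N := 0) (fun i _ => htr0 i)
      rw [psum_zero] at h1
      rw [h1]
      exact Even.zero
    · intro p hp _
      have hset : {i | transpose d i = p} = (∅ : Set ℕ) := by
        ext i
        simp only [Set.mem_setOf_eq, Set.mem_empty_iff_false, iff_false]
        rw [htr0 i]
        omega
      rw [mult, hset, Set.ncard_empty]
      exact Even.zero
    · rw [hdsize]
      omega
  · -- main case
    set r := numParts e with hrdef
    have hrA : r = Anum e 1 := rfl
    have hchar : ∀ i, 1 ≤ e i ↔ i < r := by
      intro i
      rw [hrA]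
      exact Anum_lt_iff hanti h0e le_rfl i
    have hr1 : 1 ≤ r := by
      by_contra h
      push_neg at h
      have h2 : ∀ i, e i = 0 := by
        intro i
        have := hchar i
        omega
      have h3 : size e = 0 := by
        have h4 := size_eq_psum (f := e) (N := 0) (fun i _ => h2 i)
        rw [psum_zero] at h4
        exact h4
      exact hn0 h3
    have hr2 : 2 ≤ r := by
      by_contra h
      push_neg at h
      have hr1' : r = 1 := by omega
      have hz : ∀ i, 1 ≤ i → e i = 0 := by
        intro i hi
        have := hchar i
        omega
      have hse : size e = e 0 := by
        have h1 := size_eq_psum (f := e) (N := 1) (fun i hi => hz i hi)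
        rw [h1]
        have h2 : psum e 1 = psum e 0 + e 0 := psum_succ e 0
        rw [psum_zero] at h2
        omega
      have he0pos : 1 ≤ e 0 := (hchar 0).2 (by omega)
      have he0even : Even (e 0) := by
        rw [← hse, hsize]
        exact ⟨n, by ring⟩
      have hm1 : mult e (e 0) = 1 := by
        have hset : {i | e i = e 0} = {0} := by
          ext i
          simp only [Set.mem_setOf_eq, Set.mem_singleton_iff]
          constructor
          · intro hi
            by_contra hne
            have := hz i (by omega)
            omega
          · rintro rfl
            rfl
        rw [mult, hset, Set.ncard_singleton]
      have hcontra := hemult (e 0) (by omega) he0even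
      rw [hm1, Nat.even_iff] at hcontra
      omega
    set d := boxMinus (boxPlus e) with hddef
    have hnp : numParts (boxPlus e) = r := by
      have hset : {j | 0 < boxPlus e j} = {j | 0 < e j} := by
        ext j
        simp only [Set.mem_setOf_eq, boxPlus]
        by_cases h : j = 0
        · subst h
          rw [if_pos rfl]
          have := (hchar 0).2 (by omega)
          omega
        · rw [if_neg h]
      have h1 : numParts (boxPlus e) = numParts e := by
        unfold numParts
        rw [hset]
      exact h1
    have hdv : ∀ i, d i = if i = r - 1 then boxPlus e i - 1 else boxPlus e i := by
      intro i
      rw [hddef]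
      unfold boxMinus
      rw [hnp]
    have hd0v : d 0 = e 0 + 1 := by
      rw [hdv, if_neg (by omega : ¬ (0:ℕ) = r - 1)]
      unfold boxPlus
      rw [if_pos rfl]
    have hdi : ∀ i, 1 ≤ i → i ≠ r - 1 → d i = e i := by
      intro i h1 h2
      rw [hdv, if_neg h2]
      unfold boxPlus
      rw [if_neg (by omega : ¬ i = 0)]
    have hdr : d (r-1) = e (r-1) - 1 := by
      rw [hdv, if_pos rfl]
      unfold boxPlus
      rw [if_neg (by omega : ¬ r - 1 = 0)]
    have her : ∀ i, r ≤ i → e i = 0 := by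
      intro i hi
      have := hchar i
      omega
    have hd0tail : ∀ i, r ≤ i → d i = 0 := by
      intro i hi
      rw [hdi i (by omega) (by omega)]
      exact her i hi
    have herpos : 1 ≤ e (r-1) := (hchar (r-1)).2 (by omega)
    have hdanti : Antitone d := by
      apply antitone_nat_of_succ_le
      intro i
      by_cases h1 : i = 0
      · subst h1
        rw [hd0v]
        by_cases h2 : (1:ℕ) = r - 1
        · rw [hdv 1, if_pos h2]
          unfold boxPlus
          rw [if_neg one_ne_zero]
          have := hanti (show 0 ≤ 1 by omega)
          omega
        · rw [hdv 1, if_neg h2]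
          unfold boxPlus
          rw [if_neg one_ne_zero]
          have := hanti (show 0 ≤ 1 by omega)
          omega
      · by_cases h2 : i = r - 1
        · subst h2
          have hz : d (r-1+1) = 0 := by
            rw [show r-1+1 = r by omega]
            exact hd0tail r le_rfl
          omega
        · by_cases h3 : i + 1 = r - 1
          · have ha : d i = e i := hdi i (by omega) h2
            have hb : d (i+1) = e (i+1) - 1 := by
              rw [h3]
              exact hdr
            have hc : e (i+1) ≤ e i := hanti (by omega)
            omega
          · have ha : d i = e i := hdi i (by omega) h2
            have hb : d (i+1) = e (i+1) := hdi (i+1) (by omega) h3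
            have hc : e (i+1) ≤ e i := hanti (by omega)
            omega
    have hdbound : ∀ i, max Ne r ≤ i → d i = 0 := fun i hi => hd0tail i (by omega)
    have hdpart : IsPartition d := ⟨hdanti, ⟨max Ne r, hdbound⟩⟩
    have hpd : ∀ kk, psum d kk + (if r-1 < kk then 1 else 0)
        = psum e kk + (if 0 < kk then 1 else 0) := by
      intro kk
      induction kk with
      | zero => simp [psum_zero]
      | succ kk ihp =>
        rw [psum_succ, psum_succ]
        by_cases h1 : kk = 0
        · subst h1
          rw [hd0v]
          split_ifs at ihp ⊢ <;> omega
        · by_cases h2 : kk = r-1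
          · subst h2
            rw [hdr]
            have := herpos
            split_ifs at ihp ⊢ <;> omega
          · rw [hdi kk (by omega) h2]
            split_ifs at ihp ⊢ <;> omega
    have hpdL : ∀ kk, 1 ≤ kk → kk ≤ r-1 → psum d kk = psum e kk + 1 := by
      intro kk h1 h2
      have := hpd kk
      split_ifs at this <;> omega
    have hpdR : ∀ kk, r ≤ kk → psum d kk = psum e kk := by
      intro kk h1
      have := hpd kk
      split_ifs at this <;> omega
    have hsizede : size d = size e := by
      rw [size_eq_psum hdbound,
        size_eq_psum (f := e) (N := max Ne r) (fun i hi => h0e i (by omega))]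
      exact hpdR _ (by omega)
    have hdsize2n : size d = 2*n := by rw [hsizede, hsize]
    have hspec : ∀ j, psum e (2*j) % 2 = 0 := by
      have hmt : ∀ p, 1 ≤ p → p % 2 = 1 → (e (p-1) - e p) % 2 = 0 := by
        intro p h1 h2
        have h3 := hesp.2.2 p (Nat.odd_iff.2 h2)
        rw [mult_transpose hanti h0e h1] at h3
        rw [← Nat.even_iff]
        exact h3
      intro j
      induction j with
      | zero => simp [psum_zero]
      | succ j ihj =>
        have e1 : psum e (2*j+1) = psum e (2*j) + e (2*j) := psum_succ e (2*j)
        have e2 : psum e (2*j+2) = psum e (2*j+1) + e (2*j+1) := psum_succ e (2*j+1)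
        have e3 := hmt (2*j+1) (by omega) (by omega)
        rw [show 2*j+1-1 = 2*j by omega] at e3
        have e4 : e (2*j+1) ≤ e (2*j) := hanti (by omega)
        rw [show 2*(j+1) = 2*j+2 by ring]
        omega
    obtain ⟨c, ⟨hcC, hcDom, hcMax⟩, hinv1, hinv2⟩ :=
      exists_collapseC _ d hdpart (by rw [hdsize2n]; exact ⟨n, by ring⟩) le_rfl
    have hm : mSP e = c := by
      unfold mSP collapseC
      rw [← hddef]
      exact collapse_eq_of_isCollapse ⟨hcC, hcDom, hcMax⟩
    obtain ⟨⟨hcanti, Nc, h0c⟩, hceven, hcmult⟩ := hcC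
    have hDomp := hcDom.2
    have hcsize : size c = 2*n := by rw [hcDom.1, hdsize2n]
    have hkeyOdd : ∀ i, i % 2 = 1 → psum c i % 2 = 0 := by
      intro i hi
      by_contra hodd'
      have hodd : psum c i % 2 = 1 := by omega
      have hceq : psum c i = psum d i := by
        have h1 := hinv1 i
        have h2 := hDomp i
        rcases Nat.even_or_odd (psum d i) with hev | hov
        · have := hinv2 i hev
          omega
        · rw [Nat.odd_iff] at hov
          omega
      have hflat : ∀ j, 1 ≤ j → psum c j % 2 = 1 → c (j-1) = c j := by
        intro j hj hoddj
        by_contra hne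
        have hlt : c j < c (j-1) := lt_of_le_of_ne (hcanti (by omega)) (fun h => hne h.symm)
        have := even_psum_of_drop ⟨⟨hcanti, Nc, h0c⟩, hceven, hcmult⟩ hj hlt
        rw [Nat.even_iff] at this
        omega
      have K : ∀ j, 1 ≤ j → psum c j = psum d j → psum c j % 2 = 1 →
          c (j-1) = c j ∧ psum c (j-1) = psum d (j-1) ∧ c (j-1) = d (j-1) ∧ c j ≤ d j := by
        intro j hj he1 ho1
        have hfl := hflat j hj ho1
        have h1 := hDomp (j+1)
        have h2 : psum c (j+1) = psum c j + c j := psum_succ c j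
        have h3 : psum d (j+1) = psum d j + d j := psum_succ d j
        have hcd : c j ≤ d j := by omega
        have h4 : psum c ((j-1)+1) = psum c (j-1) + c (j-1) := psum_succ c (j-1)
        have h5 : psum d ((j-1)+1) = psum d (j-1) + d (j-1) := psum_succ d (j-1)
        rw [show j-1+1 = j by omega] at h4 h5
        have h6 := hDomp (j-1)
        have h8 : d j ≤ d (j-1) := hdanti (by omega)
        exact ⟨hfl, by omega, by omega, hcd⟩
      have hi1 : 1 ≤ i := by omega
      have hir : i < r := by
        by_contra hge
        push_neg at hge
        have h1 : psum d i = psum e i := hpdR i hge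
        have h2 : psum e i = size e := by
          rw [size_eq_psum (f := e) (N := i) (fun j hj => her j (by omega))]
        have h3 : size e % 2 = 0 := by rw [hsize]; omega
        omega
      have hpde : psum d i = psum e i + 1 := hpdL i hi1 (by omega)
      obtain ⟨hfl, heq1, hcd1, hcdle⟩ := K i hi1 hceq hodd
      by_cases hi3 : i = 1
      · subst hi3
        rw [show (1:ℕ)-1 = 0 from rfl] at hfl heq1 hcd1
        have h1 : psum c 1 = c 0 := by
          have h2 : psum c 1 = psum c 0 + c 0 := psum_succ c 0
          rw [psum_zero] at h2
          omega
        have h2 : d 1 ≤ d 0 := hdanti (by omega)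
        have h3 : d 0 = d 1 := by omega
        by_cases hr2' : r = 2
        · have h4 : d 1 = e 1 - 1 := by
            have h6 := hdr
            rw [show r-1 = 1 by omega] at h6
            exact h6
          have h5 : e 1 ≤ e 0 := hanti (by omega)
          omega
        · have h4 : d 1 = e 1 := hdi 1 (by omega) (by omega)
          have h5 : e 1 ≤ e 0 := hanti (by omega)
          omega
      · have hi3' : 3 ≤ i := by omega
        have hdi1 : d (i-1) = e (i-1) := hdi (i-1) (by omega) (by omega)
        have hpei : psum e ((i-1)+1) = psum e (i-1) + e (i-1) := psum_succ e (i-1)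
        rw [show i-1+1 = i by omega] at hpei
        have hev1 : psum e i % 2 = 0 := by omega
        have hev2 : psum e (i-1) % 2 = 0 := by
          have h1 := hspec ((i-1)/2)
          rw [show 2*((i-1)/2) = i-1 by omega] at h1
          exact h1
        have hveven : c i % 2 = 0 := by omega
        have chain : ∀ t, t ≤ i - 1 →
            psum c (i - t) = psum d (i - t) ∧ psum c (i - t) % 2 = 1 ∧ c (i - t) = c i := by
          intro t
          induction t with
          | zero =>
            intro _
            refine ⟨by simpa using hceq, by simpa using hodd, by simp⟩
          | succ t iht =>
            intro hle
            obtain ⟨e1, o1, v1⟩ := iht (by omega)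
            have hj2 : 2 ≤ i - t := by omega
            obtain ⟨kfl, ke, kd, _⟩ := K (i-t) (by omega) e1 o1
            have hidx : i - (t+1) = (i-t) - 1 := by omega
            rw [hidx]
            refine ⟨ke, ?_, by omega⟩
            have h4 : psum c (((i-t)-1)+1) = psum c ((i-t)-1) + c ((i-t)-1) :=
              psum_succ c ((i-t)-1)
            rw [show (i-t)-1+1 = i-t by omega] at h4
            omega
        obtain ⟨e1, o1, v1⟩ := chain (i-1) le_rfl
        rw [show i - (i-1) = 1 by omega] at e1 o1 v1
        have hfl0 := hflat 1 le_rfl o1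
        rw [show (1:ℕ)-1 = 0 from rfl] at hfl0
        have h1 : psum c 1 = c 0 := by
          have h2 : psum c 1 = psum c 0 + c 0 := psum_succ c 0
          rw [psum_zero] at h2
          omega
        omega
    refine ⟨?_, ?_, ?_⟩
    · rw [hm]
      exact ⟨⟨hcanti, Nc, h0c⟩, hceven, hcmult⟩
    · rw [hm]
      refine ⟨transpose_partition ⟨hcanti, Nc, h0c⟩, ?_, ?_⟩
      · rw [size_transpose hcanti h0c, hcsize]
        exact ⟨n, by ring⟩
      · intro p hp hpe
        rw [mult_transpose hcanti h0c (by omega : 1 ≤ p)]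
        have h1 : c p ≤ c (p-1) := hcanti (by omega)
        have h2 : psum c ((p-1)+1) = psum c (p-1) + c (p-1) := psum_succ c (p-1)
        rw [show p-1+1 = p by omega] at h2
        have h3 : psum c (p+1) = psum c p + c p := psum_succ c p
        have h4 := hkeyOdd (p-1) (by rw [Nat.even_iff] at hpe; omega)
        have h5 := hkeyOdd (p+1) (by rw [Nat.even_iff] at hpe; omega)
        rw [Nat.even_iff]
        omega
    · rw [hm]
      exact hcsize
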